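/- For real numbers l, a, b with 0 < b ≤ a < l ≤ L, where L := √(a² + b²), the intersection probability P(l,a,b) equals (1/π)·(L² + l²)/(ab) − (2/π)·((l/a)·√(1 − a²/l²) + (l/b)·√(1 − b²/l²)) + (2/π)·(π − arcsin(a/l) − arcsin(b/l)). -/
import Mathlib


open Real MeasureTheory Filter

/-- `A(l,a) = ∫_0^π min(a, l·|cos φ|) dφ` -/
noncomputable def A2 (l a : ℝ) : ℝ := ∫ φ in (0:ℝ)..π, min a (l * |Real.cos φ|)

/-- `B(l,b) = ∫_0^π min(b, l·sin φ) dφ` -/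
noncomputable def B2 (l b : ℝ) : ℝ := ∫ φ in (0:ℝ)..π, min b (l * Real.sin φ)

/-- `AB(l,a,b) = ∫_0^π min(a, l·|cos φ|)·min(b, l·sin φ) dφ` -/
noncomputable def AB2 (l a b : ℝ) : ℝ :=
  ∫ φ in (0:ℝ)..π, min a (l * |Real.cos φ|) * min b (l * Real.sin φ)

/-- Intersection probability for the 2D Buffon–Laplace needle problem. -/
noncomputable def P2 (l a b : ℝ) : ℝ :=
  (b * A2 l a + a * B2 l b - AB2 l a b) / (π * a * b)

/-- Intersection probability for the 2D spherocylinder Buffon–Laplace problem. -/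
noncomputable def P2sc (l σ a b : ℝ) : ℝ :=
  ((b - σ) * A2 l (a - σ) + (a - σ) * B2 l (b - σ) - AB2 l (a - σ) (b - σ)
    + (σ * a + σ * b - σ ^ 2) * π) / (π * a * b)

/-- `A³ᴰ(l,a) = ∫_0^{π/2} ∫_0^π min(a, l·sin ψ·|cos φ|) dφ dψ` -/
noncomputable def A3 (l a : ℝ) : ℝ :=
  ∫ ψ in (0:ℝ)..(π/2), ∫ φ in (0:ℝ)..π, min a (l * Real.sin ψ * |Real.cos φ|)

/-- `B³ᴰ(l,b) = ∫_0^{π/2} ∫_0^π min(b, l·sin ψ·sin φ) dφ dψ` -/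
noncomputable def B3 (l b : ℝ) : ℝ :=
  ∫ ψ in (0:ℝ)..(π/2), ∫ φ in (0:ℝ)..π, min b (l * Real.sin ψ * Real.sin φ)

/-- `AB³ᴰ(l,a,b) = ∫_0^{π/2} ∫_0^π min(a, l·sin ψ·|cos φ|)·min(b, l·sin ψ·sin φ) dφ dψ` -/
noncomputable def AB3 (l a b : ℝ) : ℝ :=
  ∫ ψ in (0:ℝ)..(π/2), ∫ φ in (0:ℝ)..π,
    min a (l * Real.sin ψ * |Real.cos φ|) * min b (l * Real.sin ψ * Real.sin φ)

/-- `S³ᴰ(l,a,b) = b·A³ᴰ(l,a) + a·B³ᴰ(l,b) − AB³ᴰ(l,a,b)` -/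
noncomputable def S3 (l a b : ℝ) : ℝ := b * A3 l a + a * B3 l b - AB3 l a b

/-- `F(α,β,t) = ∫_α^β √(sin²ψ − t²) dψ` -/
noncomputable def Faux (α β t : ℝ) : ℝ :=
  ∫ ψ in α..β, Real.sqrt (Real.sin ψ ^ 2 - t ^ 2)

/-- `G(α,β,t) = ∫_α^β (π/2 − arcsin(t / sin ψ)) dψ` -/
noncomputable def Gaux (α β t : ℝ) : ℝ :=
  ∫ ψ in α..β, (π / 2 - Real.arcsin (t / Real.sin ψ))



lemma my_sin_mono {x y : ℝ} (hx : 0 ≤ x) (hxy : x ≤ y) (hy : y ≤ π/2) :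
    Real.sin x ≤ Real.sin y :=
  Real.sin_le_sin_of_le_of_le_pi_div_two (by linarith [Real.pi_pos]) hy hxy

lemma my_A2_eq (l a : ℝ) (ha : 0 < a) (hal : a < l) :
    A2 l a = 2 * (a * Real.arccos (a / l)
      + l - l * Real.sqrt (1 - a ^ 2 / l ^ 2)) := by
  have hl : 0 < l := ha.trans hal
  have hpi := Real.pi_pos
  have hx0 : 0 < a / l := div_pos ha hl
  have hx1 : a / l < 1 := (div_lt_one hl).2 hal
  set α := Real.arccos (a / l) with hαdef
  have hα0 : 0 < α := Real.arccos_pos.2 hx1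
  have hα2 : α < π / 2 := Real.arccos_lt_pi_div_two.2 hx0
  have hcosα : Real.cos α = a / l := Real.cos_arccos (by linarith) (by linarith)
  have hsinα : Real.sin α = Real.sqrt (1 - a ^ 2 / l ^ 2) := by
    rw [hαdef, Real.sin_arccos, div_pow]
  have hcont : Continuous fun φ : ℝ => min a (l * |Real.cos φ|) :=
    continuous_const.min (continuous_const.mul Real.continuous_cos.abs)
  have hint : ∀ u v : ℝ, IntervalIntegrable
      (fun φ : ℝ => min a (l * |Real.cos φ|)) volume u v :=
    fun u v => hcont.intervalIntegrable u v
  have hsplit : A2 l a = (∫ φ in (0:ℝ)..α, min a (l * |Real.cos φ|))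
      + (∫ φ in α..(π/2), min a (l * |Real.cos φ|))
      + (∫ φ in (π/2)..(π - α), min a (l * |Real.cos φ|))
      + (∫ φ in (π - α)..π, min a (l * |Real.cos φ|)) := by
    rw [A2]
    rw [← intervalIntegral.integral_add_adjacent_intervals (hint 0 α) (hint α π),
      ← intervalIntegral.integral_add_adjacent_intervals (hint α (π/2)) (hint (π/2) π),
      ← intervalIntegral.integral_add_adjacent_intervals (hint (π/2) (π-α)) (hint (π-α) π)]
    ring
  have h1 : (∫ φ in (0:ℝ)..α, min a (l * |Real.cos φ|)) = α * a := by
    rw [intervalIntegral.integral_congr (g := fun _ => a)]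
    · simp
    · intro φ hφ
      rw [Set.uIcc_of_le hα0.le] at hφ
      obtain ⟨hφ1, hφ2⟩ := hφ
      have hc : Real.cos α ≤ Real.cos φ :=
        Real.cos_le_cos_of_nonneg_of_le_pi hφ1 (by linarith) hφ2
      have hc0 : 0 < Real.cos φ := lt_of_lt_of_le (hcosα ▸ hx0) hc
      show min a (l * |Real.cos φ|) = a
      rw [abs_of_pos hc0, min_eq_left]
      calc a = l * (a / l) := by field_simp
      _ ≤ l * Real.cos φ := by
          apply mul_le_mul_of_nonneg_left _ hl.le
          rw [← hcosα]; exact hc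
  have h2 : (∫ φ in α..(π/2), min a (l * |Real.cos φ|)) = l * (1 - Real.sin α) := by
    rw [intervalIntegral.integral_congr (g := fun φ => l * Real.cos φ)]
    · rw [intervalIntegral.integral_const_mul, integral_cos, Real.sin_pi_div_two]
    · intro φ hφ
      rw [Set.uIcc_of_le hα2.le] at hφ
      obtain ⟨hφ1, hφ2⟩ := hφ
      have hφ0 : 0 ≤ φ := le_trans hα0.le hφ1
      have hc0 : 0 ≤ Real.cos φ := Real.cos_nonneg_of_mem_Icc ⟨by linarith, hφ2⟩
      have hc : Real.cos φ ≤ Real.cos α :=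
        Real.cos_le_cos_of_nonneg_of_le_pi hα0.le (by linarith) hφ1
      show min a (l * |Real.cos φ|) = l * Real.cos φ
      rw [abs_of_nonneg hc0, min_eq_right]
      calc l * Real.cos φ ≤ l * (a / l) := by
            apply mul_le_mul_of_nonneg_left _ hl.le; rw [← hcosα]; exact hc
      _ = a := by field_simp
  have h3 : (∫ φ in (π/2)..(π - α), min a (l * |Real.cos φ|)) = l * (1 - Real.sin α) := by
    rw [intervalIntegral.integral_congr (g := fun φ => l * (-Real.cos φ))]
    · rw [intervalIntegral.integral_const_mul, intervalIntegral.integral_neg,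
        integral_cos, Real.sin_pi_sub, Real.sin_pi_div_two]
      ring
    · intro φ hφ
      rw [Set.uIcc_of_le (by linarith : π/2 ≤ π - α)] at hφ
      obtain ⟨hφ1, hφ2⟩ := hφ
      have hc0 : Real.cos φ ≤ 0 :=
        Real.cos_nonpos_of_pi_div_two_le_of_le hφ1 (by linarith)
      have hc : Real.cos (π - α) ≤ Real.cos φ :=
        Real.cos_le_cos_of_nonneg_of_le_pi (by linarith) (by linarith) hφ2
      rw [Real.cos_pi_sub] at hc
      show min a (l * |Real.cos φ|) = l * -Real.cos φ
      rw [abs_of_nonpos hc0, min_eq_right]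
      calc l * -Real.cos φ ≤ l * (a / l) := by
            apply mul_le_mul_of_nonneg_left _ hl.le
            rw [← hcosα]; linarith
      _ = a := by field_simp
  have h4 : (∫ φ in (π - α)..π, min a (l * |Real.cos φ|)) = α * a := by
    rw [intervalIntegral.integral_congr (g := fun _ => a)]
    · simp
    · intro φ hφ
      rw [Set.uIcc_of_le (by linarith : π - α ≤ π)] at hφ
      obtain ⟨hφ1, hφ2⟩ := hφ
      have hc : Real.cos φ ≤ Real.cos (π - α) :=
        Real.cos_le_cos_of_nonneg_of_le_pi (by linarith) hφ2 hφ1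
      rw [Real.cos_pi_sub] at hc
      have hc0 : Real.cos φ ≤ 0 := le_trans hc (by rw [hcosα]; linarith)
      show min a (l * |Real.cos φ|) = a
      rw [abs_of_nonpos hc0, min_eq_left]
      calc a = l * (a / l) := by field_simp
      _ ≤ l * -Real.cos φ := by
          apply mul_le_mul_of_nonneg_left _ hl.le
          rw [← hcosα]; linarith
  rw [hsplit, h1, h2, h3, h4, hsinα]; ring




lemma my_B2_eq (l b : ℝ) (hb : 0 < b) (hbl : b < l) :
    B2 l b = 2 * (l - l * Real.sqrt (1 - b ^ 2 / l ^ 2))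
      + b * (π - 2 * Real.arcsin (b / l)) := by
  have hl : 0 < l := hb.trans hbl
  have hpi := Real.pi_pos
  have hx0 : 0 < b / l := div_pos hb hl
  have hx1 : b / l < 1 := (div_lt_one hl).2 hbl
  set β := Real.arcsin (b / l) with hβdef
  have hβ0 : 0 < β := Real.arcsin_pos.2 hx0
  have hβ2 : β < π / 2 := Real.arcsin_lt_pi_div_two.2 hx1
  have hsinβ : Real.sin β = b / l := Real.sin_arcsin (by linarith) (by linarith)
  have hcosβ : Real.cos β = Real.sqrt (1 - b ^ 2 / l ^ 2) := by
    rw [hβdef, Real.cos_arcsin, div_pow]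
  have hcont : Continuous fun φ : ℝ => min b (l * Real.sin φ) :=
    continuous_const.min (continuous_const.mul Real.continuous_sin)
  have hint : ∀ u v : ℝ, IntervalIntegrable
      (fun φ : ℝ => min b (l * Real.sin φ)) volume u v :=
    fun u v => hcont.intervalIntegrable u v
  have hsplit : B2 l b = (∫ φ in (0:ℝ)..β, min b (l * Real.sin φ))
      + (∫ φ in β..(π - β), min b (l * Real.sin φ))
      + (∫ φ in (π - β)..π, min b (l * Real.sin φ)) := by
    rw [B2,
      ← intervalIntegral.integral_add_adjacent_intervals (hint 0 β) (hint β π),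
      ← intervalIntegral.integral_add_adjacent_intervals (hint β (π-β)) (hint (π-β) π)]
    ring
  have hle : ∀ φ : ℝ, Real.sin φ ≤ b / l → min b (l * Real.sin φ) = l * Real.sin φ := by
    intro φ h
    rw [min_eq_right]
    calc l * Real.sin φ ≤ l * (b / l) := mul_le_mul_of_nonneg_left h hl.le
    _ = b := by field_simp
  have h1 : (∫ φ in (0:ℝ)..β, min b (l * Real.sin φ)) = l * (1 - Real.cos β) := by
    rw [intervalIntegral.integral_congr (g := fun φ => l * Real.sin φ)]
    · rw [intervalIntegral.integral_const_mul, integral_sin, Real.cos_zero]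
    · intro φ hφ
      rw [Set.uIcc_of_le hβ0.le] at hφ
      obtain ⟨hφ1, hφ2⟩ := hφ
      exact hle φ (hsinβ ▸ my_sin_mono hφ1 hφ2 hβ2.le)
  have h2 : (∫ φ in β..(π - β), min b (l * Real.sin φ)) = (π - 2 * β) * b := by
    rw [intervalIntegral.integral_congr (g := fun _ => b)]
    · rw [intervalIntegral.integral_const, smul_eq_mul]; ring
    · intro φ hφ
      rw [Set.uIcc_of_le (by linarith : β ≤ π - β)] at hφ
      obtain ⟨hφ1, hφ2⟩ := hφ
      have hs : Real.sin β ≤ Real.sin φ := by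
        rcases le_or_gt φ (π/2) with h | h
        · exact my_sin_mono hβ0.le hφ1 h
        · rw [← Real.sin_pi_sub φ]
          exact my_sin_mono hβ0.le (by linarith) (by linarith)
      rw [hsinβ] at hs
      show min b (l * Real.sin φ) = b
      rw [min_eq_left]
      calc b = l * (b / l) := by field_simp
      _ ≤ l * Real.sin φ := mul_le_mul_of_nonneg_left hs hl.le
  have h3 : (∫ φ in (π - β)..π, min b (l * Real.sin φ)) = l * (1 - Real.cos β) := by
    rw [intervalIntegral.integral_congr (g := fun φ => l * Real.sin φ)]
    · rw [intervalIntegral.integral_const_mul, integral_sin, Real.cos_pi_sub,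
        Real.cos_pi]
      ring
    · intro φ hφ
      rw [Set.uIcc_of_le (by linarith : π - β ≤ π)] at hφ
      obtain ⟨hφ1, hφ2⟩ := hφ
      apply hle
      rw [← Real.sin_pi_sub φ, ← hsinβ]
      exact my_sin_mono (by linarith) (by linarith) hβ2.le
  rw [hsplit, h1, h2, h3, hcosβ]; ring




lemma my_integral_sin_mul_cos (u v : ℝ) :
    ∫ x in u..v, Real.sin x * Real.cos x
      = Real.sin v ^ 2 / 2 - Real.sin u ^ 2 / 2 := by
  have h : ∀ x ∈ Set.uIcc u v, HasDerivAt (fun y => Real.sin y ^ 2 / 2)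
      (Real.sin x * Real.cos x) x := by
    intro x _
    have := ((Real.hasDerivAt_sin x).pow 2).div_const 2
    simpa [mul_comm, mul_assoc, mul_div_assoc] using this
  have := intervalIntegral.integral_eq_sub_of_hasDerivAt h
    ((Real.continuous_sin.mul Real.continuous_cos).intervalIntegrable u v)
  simpa using this

lemma my_AB2_eq (l a b : ℝ) (hb : 0 < b) (hba : b ≤ a) (hal : a < l)
    (hlL : l ^ 2 ≤ a ^ 2 + b ^ 2) :
    AB2 l a b = 2*a*l + 2*b*l - a^2 - b^2 - l^2 := by
  have ha : 0 < a := lt_of_lt_of_le hb hba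
  have hl : 0 < l := ha.trans hal
  have hbl : b < l := lt_of_le_of_lt hba hal
  have hpi := Real.pi_pos
  have hxa0 : 0 < a / l := div_pos ha hl
  have hxa1 : a / l < 1 := (div_lt_one hl).2 hal
  have hxb0 : 0 < b / l := div_pos hb hl
  have hxb1 : b / l < 1 := (div_lt_one hl).2 hbl
  set α := Real.arccos (a / l) with hαdef
  set β := Real.arcsin (b / l) with hβdef
  have hα0 : 0 < α := Real.arccos_pos.2 hxa1
  have hα2 : α < π / 2 := Real.arccos_lt_pi_div_two.2 hxa0
  have hβ0 : 0 < β := Real.arcsin_pos.2 hxb0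
  have hβ2 : β < π / 2 := Real.arcsin_lt_pi_div_two.2 hxb1
  have hcosα : Real.cos α = a / l := Real.cos_arccos (by linarith) (by linarith)
  have hsinβ : Real.sin β = b / l := Real.sin_arcsin (by linarith) (by linarith)
  have hsinα2 : Real.sin α ^ 2 = 1 - (a / l) ^ 2 := by
    rw [hαdef, Real.sin_arccos, Real.sq_sqrt]
    nlinarith
  have hsinαβ : Real.sin α ≤ Real.sin β := by
    rw [hαdef, Real.sin_arccos, hsinβ]
    rw [show (1 : ℝ) - (a / l) ^ 2 = (b/l)^2 - (a^2 + b^2 - l^2)/l^2 by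
      field_simp; ring]
    calc Real.sqrt ((b/l)^2 - (a^2 + b^2 - l^2)/l^2) ≤ Real.sqrt ((b/l)^2) := by
          apply Real.sqrt_le_sqrt
          have : 0 ≤ (a^2 + b^2 - l^2)/l^2 := div_nonneg (by linarith) (by positivity)
          linarith
    _ = b / l := Real.sqrt_sq hxb0.le
  have hαβ : α ≤ β := by
    by_contra h
    push_neg at h
    have := Real.strictMonoOn_sin ⟨by linarith, by linarith⟩
      ⟨by linarith, by linarith⟩ h
    linarith
  have hcont : Continuous fun φ : ℝ =>
      min a (l * |Real.cos φ|) * min b (l * Real.sin φ) :=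
    (continuous_const.min (continuous_const.mul Real.continuous_cos.abs)).mul
      (continuous_const.min (continuous_const.mul Real.continuous_sin))
  have hint : ∀ u v : ℝ, IntervalIntegrable
      (fun φ : ℝ => min a (l * |Real.cos φ|) * min b (l * Real.sin φ)) volume u v :=
    fun u v => hcont.intervalIntegrable u v
  -- min helpers
  have hminb_lo : ∀ φ : ℝ, Real.sin φ ≤ b / l →
      min b (l * Real.sin φ) = l * Real.sin φ := by
    intro φ h
    rw [min_eq_right]
    calc l * Real.sin φ ≤ l * (b / l) := mul_le_mul_of_nonneg_left h hl.le
    _ = b := by field_simp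
  have hminb_hi : ∀ φ : ℝ, b / l ≤ Real.sin φ →
      min b (l * Real.sin φ) = b := by
    intro φ h
    rw [min_eq_left]
    calc b = l * (b / l) := by field_simp
    _ ≤ l * Real.sin φ := mul_le_mul_of_nonneg_left h hl.le
  have hmina_lo : ∀ φ : ℝ, |Real.cos φ| ≤ a / l →
      min a (l * |Real.cos φ|) = l * |Real.cos φ| := by
    intro φ h
    rw [min_eq_right]
    calc l * |Real.cos φ| ≤ l * (a / l) := mul_le_mul_of_nonneg_left h hl.le
    _ = a := by field_simp
  have hmina_hi : ∀ φ : ℝ, a / l ≤ |Real.cos φ| →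
      min a (l * |Real.cos φ|) = a := by
    intro φ h
    rw [min_eq_left]
    calc a = l * (a / l) := by field_simp
    _ ≤ l * |Real.cos φ| := mul_le_mul_of_nonneg_left h hl.le
  have hsplit : AB2 l a b =
      (∫ φ in (0:ℝ)..α, min a (l * |Real.cos φ|) * min b (l * Real.sin φ))
      + (∫ φ in α..β, min a (l * |Real.cos φ|) * min b (l * Real.sin φ))
      + (∫ φ in β..(π/2), min a (l * |Real.cos φ|) * min b (l * Real.sin φ))
      + (∫ φ in (π/2)..(π-β), min a (l * |Real.cos φ|) * min b (l * Real.sin φ))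
      + (∫ φ in (π-β)..(π-α), min a (l * |Real.cos φ|) * min b (l * Real.sin φ))
      + (∫ φ in (π-α)..π, min a (l * |Real.cos φ|) * min b (l * Real.sin φ)) := by
    rw [AB2,
      ← intervalIntegral.integral_add_adjacent_intervals (hint 0 α) (hint α π),
      ← intervalIntegral.integral_add_adjacent_intervals (hint α β) (hint β π),
      ← intervalIntegral.integral_add_adjacent_intervals (hint β (π/2)) (hint (π/2) π),
      ← intervalIntegral.integral_add_adjacent_intervals (hint (π/2) (π-β)) (hint (π-β) π),
      ← intervalIntegral.integral_add_adjacent_intervals (hint (π-β) (π-α)) (hint (π-α) π)]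
    ring
  have h1 : (∫ φ in (0:ℝ)..α, min a (l * |Real.cos φ|) * min b (l * Real.sin φ))
      = a * l * (1 - Real.cos α) := by
    rw [intervalIntegral.integral_congr (g := fun φ => a * (l * Real.sin φ))]
    · rw [intervalIntegral.integral_const_mul, intervalIntegral.integral_const_mul,
        integral_sin, Real.cos_zero]
      ring
    · intro φ hφ
      rw [Set.uIcc_of_le hα0.le] at hφ
      obtain ⟨hφ1, hφ2⟩ := hφ
      have hc : Real.cos α ≤ Real.cos φ :=
        Real.cos_le_cos_of_nonneg_of_le_pi hφ1 (by linarith) hφ2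
      have hc0 : 0 < Real.cos φ := lt_of_lt_of_le (hcosα ▸ hxa0) hc
      have hs : Real.sin φ ≤ b / l := by
        have := my_sin_mono hφ1 hφ2 hα2.le
        rw [← hsinβ]; linarith
      show min a (l * |Real.cos φ|) * min b (l * Real.sin φ) = a * (l * Real.sin φ)
      rw [hminb_lo φ hs, hmina_hi φ (by rw [abs_of_pos hc0, ← hcosα]; exact hc)]
  have h2 : (∫ φ in α..β, min a (l * |Real.cos φ|) * min b (l * Real.sin φ))
      = l^2 * (Real.sin β ^2 / 2 - Real.sin α ^2 / 2) := by
    rw [intervalIntegral.integral_congr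
        (g := fun φ => l^2 * (Real.sin φ * Real.cos φ))]
    · rw [intervalIntegral.integral_const_mul, my_integral_sin_mul_cos]
    · intro φ hφ
      rw [Set.uIcc_of_le hαβ] at hφ
      obtain ⟨hφ1, hφ2⟩ := hφ
      have hc0 : 0 ≤ Real.cos φ :=
        Real.cos_nonneg_of_mem_Icc ⟨by linarith, by linarith⟩
      have hc : Real.cos φ ≤ Real.cos α :=
        Real.cos_le_cos_of_nonneg_of_le_pi hα0.le (by linarith) hφ1
      have hs : Real.sin φ ≤ b / l := by
        rw [← hsinβ]; exact my_sin_mono (by linarith) hφ2 hβ2.le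
      show min a (l * |Real.cos φ|) * min b (l * Real.sin φ)
        = l^2 * (Real.sin φ * Real.cos φ)
      rw [hminb_lo φ hs, hmina_lo φ (by rw [abs_of_nonneg hc0, ← hcosα]; exact hc),
        abs_of_nonneg hc0]
      ring
  have h3 : (∫ φ in β..(π/2), min a (l * |Real.cos φ|) * min b (l * Real.sin φ))
      = b * l * (1 - Real.sin β) := by
    rw [intervalIntegral.integral_congr (g := fun φ => (l * Real.cos φ) * b)]
    · rw [intervalIntegral.integral_mul_const, intervalIntegral.integral_const_mul,
        integral_cos, Real.sin_pi_div_two]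
      ring
    · intro φ hφ
      rw [Set.uIcc_of_le hβ2.le] at hφ
      obtain ⟨hφ1, hφ2⟩ := hφ
      have hc0 : 0 ≤ Real.cos φ :=
        Real.cos_nonneg_of_mem_Icc ⟨by linarith, by linarith⟩
      have hc : Real.cos φ ≤ Real.cos α :=
        Real.cos_le_cos_of_nonneg_of_le_pi hα0.le (by linarith) (by linarith)
      have hs : b / l ≤ Real.sin φ := by
        rw [← hsinβ]; exact my_sin_mono hβ0.le hφ1 hφ2
      show min a (l * |Real.cos φ|) * min b (l * Real.sin φ) = (l * Real.cos φ) * b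
      rw [hminb_hi φ hs, hmina_lo φ (by rw [abs_of_nonneg hc0, ← hcosα]; exact hc),
        abs_of_nonneg hc0]
  have h4 : (∫ φ in (π/2)..(π-β), min a (l * |Real.cos φ|) * min b (l * Real.sin φ))
      = b * l * (1 - Real.sin β) := by
    rw [intervalIntegral.integral_congr (g := fun φ => (l * -Real.cos φ) * b)]
    · rw [intervalIntegral.integral_mul_const]
      have : (∫ φ in (π/2)..(π-β), l * -Real.cos φ)
          = l * -∫ φ in (π/2)..(π-β), Real.cos φ := by
        rw [← intervalIntegral.integral_neg, ← intervalIntegral.integral_const_mul]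
      rw [this, integral_cos, Real.sin_pi_sub, Real.sin_pi_div_two]
      ring
    · intro φ hφ
      rw [Set.uIcc_of_le (by linarith : π/2 ≤ π - β)] at hφ
      obtain ⟨hφ1, hφ2⟩ := hφ
      have hc0 : Real.cos φ ≤ 0 :=
        Real.cos_nonpos_of_pi_div_two_le_of_le hφ1 (by linarith)
      have hc : Real.cos (π - β) ≤ Real.cos φ :=
        Real.cos_le_cos_of_nonneg_of_le_pi (by linarith) (by linarith) hφ2
      rw [Real.cos_pi_sub] at hc
      have hcβα : Real.cos β ≤ Real.cos α :=
        Real.cos_le_cos_of_nonneg_of_le_pi hα0.le (by linarith) hαβ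
      have hs : b / l ≤ Real.sin φ := by
        rw [← hsinβ, ← Real.sin_pi_sub φ]
        exact my_sin_mono hβ0.le (by linarith) (by linarith)
      show min a (l * |Real.cos φ|) * min b (l * Real.sin φ) = (l * -Real.cos φ) * b
      rw [hminb_hi φ hs,
        hmina_lo φ (by rw [abs_of_nonpos hc0, ← hcosα]; linarith),
        abs_of_nonpos hc0]
  have h5 : (∫ φ in (π-β)..(π-α), min a (l * |Real.cos φ|) * min b (l * Real.sin φ))
      = l^2 * (Real.sin β ^2 / 2 - Real.sin α ^2 / 2) := by
    rw [intervalIntegral.integral_congr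
        (g := fun φ => -(l^2) * (Real.sin φ * Real.cos φ))]
    · rw [intervalIntegral.integral_const_mul, my_integral_sin_mul_cos,
        Real.sin_pi_sub, Real.sin_pi_sub]
      ring
    · intro φ hφ
      rw [Set.uIcc_of_le (by linarith : π - β ≤ π - α)] at hφ
      obtain ⟨hφ1, hφ2⟩ := hφ
      have hc0 : Real.cos φ ≤ 0 :=
        Real.cos_nonpos_of_pi_div_two_le_of_le (by linarith) (by linarith)
      have hc : Real.cos (π - α) ≤ Real.cos φ :=
        Real.cos_le_cos_of_nonneg_of_le_pi (by linarith) (by linarith) hφ2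
      rw [Real.cos_pi_sub] at hc
      have hs : Real.sin φ ≤ b / l := by
        rw [← hsinβ, ← Real.sin_pi_sub φ]
        exact my_sin_mono (by linarith) (by linarith) (by linarith)
      show min a (l * |Real.cos φ|) * min b (l * Real.sin φ)
        = -(l^2) * (Real.sin φ * Real.cos φ)
      rw [hminb_lo φ hs,
        hmina_lo φ (by rw [abs_of_nonpos hc0, ← hcosα]; linarith),
        abs_of_nonpos hc0]
      ring
  have h6 : (∫ φ in (π-α)..π, min a (l * |Real.cos φ|) * min b (l * Real.sin φ))
      = a * l * (1 - Real.cos α) := by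
    rw [intervalIntegral.integral_congr (g := fun φ => a * (l * Real.sin φ))]
    · rw [intervalIntegral.integral_const_mul, intervalIntegral.integral_const_mul,
        integral_sin, Real.cos_pi_sub, Real.cos_pi]
      ring
    · intro φ hφ
      rw [Set.uIcc_of_le (by linarith : π - α ≤ π)] at hφ
      obtain ⟨hφ1, hφ2⟩ := hφ
      have hc : Real.cos φ ≤ Real.cos (π - α) :=
        Real.cos_le_cos_of_nonneg_of_le_pi (by linarith) hφ2 hφ1
      rw [Real.cos_pi_sub] at hc
      have hc0 : Real.cos φ ≤ 0 := le_trans hc (by rw [hcosα]; linarith)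
      have hs : Real.sin φ ≤ b / l := by
        rw [← hsinβ, ← Real.sin_pi_sub φ]
        calc Real.sin (π - φ) ≤ Real.sin α :=
              my_sin_mono (by linarith) (by linarith) hα2.le
        _ ≤ Real.sin β := hsinαβ
      show min a (l * |Real.cos φ|) * min b (l * Real.sin φ) = a * (l * Real.sin φ)
      rw [hminb_lo φ hs,
        hmina_hi φ (by rw [abs_of_nonpos hc0, ← hcosα]; linarith)]
  rw [hsplit, h1, h2, h3, h4, h5, h6, hcosα, hsinβ, hsinα2]
  have hsinβ2 : (b / l) ^ 2 = b^2 / l^2 := by rw [div_pow]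
  field_simp
  ring

theorem stmt7 (l a b : ℝ) (hb : 0 < b) (hba : b ≤ a) (hal : a < l)
    (hlL : l ≤ Real.sqrt (a ^ 2 + b ^ 2)) :
    P2 l a b = 1 / π * ((Real.sqrt (a ^ 2 + b ^ 2) ^ 2 + l ^ 2) / (a * b))
      - 2 / π * ((l / a) * Real.sqrt (1 - a ^ 2 / l ^ 2)
        + (l / b) * Real.sqrt (1 - b ^ 2 / l ^ 2))
      + 2 / π * (π - Real.arcsin (a / l) - Real.arcsin (b / l)) := by
  have ha : 0 < a := lt_of_lt_of_le hb hba
  have hl : 0 < l := ha.trans hal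
  have hbl : b < l := lt_of_le_of_lt hba hal
  have hpi := Real.pi_pos
  have hl2 : l ^ 2 ≤ a ^ 2 + b ^ 2 := (Real.le_sqrt hl.le (by positivity)).mp hlL
  have hsq : Real.sqrt (a ^ 2 + b ^ 2) ^ 2 = a ^ 2 + b ^ 2 :=
    Real.sq_sqrt (by positivity)
  rw [P2, my_A2_eq l a ha hal, my_B2_eq l b hb hbl, my_AB2_eq l a b hb hba hal hl2,
    hsq, Real.arccos_eq_pi_div_two_sub_arcsin]
  field_simp
  ring
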